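/- Let w_1,…,w_N ∈ ℝ^D be nonzero vectors spanning ℝ^D whose index set cannot be partitioned into two nonempty subsets S, T with w_i·w_j = 0 for all i ∈ S and j ∈ T, and let W be the D×N matrix with columns w_1,…,w_N. If Σ_{i=1}^N C_i(W) = D, then W W^T = μ I_D for some real μ > 0. -/

import Mathlib

open scoped BigOperators
open Matrix

/-- The capacity of feature `i` for an embedding matrix `W`:
`C_i = (w_i·w_i)² / (∑_j (w_i·w_j)²)`, with `C_i = 0` when `w_i = 0`
(automatic from `0 / 0 = 0`). -/
noncomputable def capacity {D N : ℕ} (W : Matrix (Fin D) (Fin N) ℝ) (i : Fin N) : ℝ :=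
  (∑ a, W a i * W a i) ^ 2 / ∑ j, (∑ a, W a i * W a j) ^ 2

private lemma quadForm_entry {D N : ℕ} (W : Matrix (Fin D) (Fin N) ℝ)
    (A : Matrix (Fin D) (Fin D) ℝ) (i j : Fin N) :
    (Wᵀ * A * W) i j = Wᵀ i ⬝ᵥ (A *ᵥ Wᵀ j) := by
  simp [Matrix.mul_apply, Matrix.mulVec, dotProduct, Finset.sum_mul, Finset.mul_sum, mul_assoc]
  exact Finset.sum_comm

private lemma bform_symm {D : ℕ} {M : Matrix (Fin D) (Fin D) ℝ} (hM : M.IsHermitian)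
    (x y : Fin D → ℝ) : x ⬝ᵥ (M *ᵥ y) = y ⬝ᵥ (M *ᵥ x) := by
  rw [dotProduct_mulVec, ← mulVec_transpose]
  rw [show Mᵀ = M from (by simpa [Matrix.conjTranspose_eq_transpose_of_trivial] using hM : M.IsSymm)]
  exact dotProduct_comm _ _

private lemma dp_self_pos {D : ℕ} {v : Fin D → ℝ} (hv : v ≠ 0) : 0 < v ⬝ᵥ v := by
  rcases lt_or_eq_of_le (Finset.sum_nonneg fun a _ => mul_self_nonneg (v a)) with h | h
  · exact h
  · exact absurd (dotProduct_self_eq_zero.mp h.symm) hv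

/-- If the columns `w_1, …, w_N` of `W` are nonzero, span `ℝ^D`, cannot be
split into two nonempty mutually orthogonal groups, and `∑ i, C_i(W) = D`, then
`W Wᵀ = μ I` for some `μ > 0`. -/
theorem efficient_irreducible_isScalarGram
    {D N : ℕ} (W : Matrix (Fin D) (Fin N) ℝ)
    (hnz : ∀ i, Wᵀ i ≠ 0)
    (hspan : Submodule.span ℝ (Set.range fun i => Wᵀ i) = ⊤)
    (hirr : ¬ ∃ S : Finset (Fin N), S.Nonempty ∧ Sᶜ.Nonempty ∧
        ∀ i ∈ S, ∀ j ∈ Sᶜ, ∑ a, W a i * W a j = 0)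
    (heff : ∑ i, capacity W i = (D : ℝ)) :
    ∃ μ : ℝ, 0 < μ ∧ W * Wᵀ = μ • (1 : Matrix (Fin D) (Fin D) ℝ) := by
  classical
  set M : Matrix (Fin D) (Fin D) ℝ := W * Wᵀ with hMdef
  have hMh : M.IsHermitian := by
    have := Matrix.isHermitian_mul_conjTranspose_self W
    simpa [Matrix.conjTranspose_eq_transpose_of_trivial] using this
  -- M is positive definite
  have hMpd : M.PosDef := by
    refine Matrix.PosDef.of_dotProduct_mulVec_pos hMh fun x hx => ?_
    have hstar : star x = x := by simp
    rw [hstar, hMdef, ← Matrix.mulVec_mulVec, dotProduct_mulVec, ← mulVec_transpose]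
    rcases eq_or_ne (Wᵀ *ᵥ x) 0 with h0 | h0
    · exfalso
      apply hx
      have hxd : x ⬝ᵥ x = 0 := by
        have hall : ∀ y ∈ Set.range (fun i => Wᵀ i), y ⬝ᵥ x = 0 := by
          rintro y ⟨i, rfl⟩
          have : (Wᵀ *ᵥ x) i = 0 := by rw [h0]; rfl
          simpa [Matrix.mulVec, dotProduct] using this
        have hx' : x ∈ Submodule.span ℝ (Set.range fun i => Wᵀ i) := by
          rw [hspan]; trivial
        refine Submodule.span_induction (p := fun y _ => y ⬝ᵥ x = 0)
          (fun y hy => hall y hy) (by simp) ?_ ?_ hx'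
        · intro a b _ _ ha hb; rw [add_dotProduct, ha, hb, add_zero]
        · intro c a _ ha; rw [smul_dotProduct, ha, smul_zero]
      exact dotProduct_self_eq_zero.mp hxd
    · exact dp_self_pos h0
  -- invertibility facts
  have hMu : IsUnit M.det := (Matrix.isUnit_iff_isUnit_det M).mp hMpd.isUnit
  have hMMi : M * M⁻¹ = 1 := Matrix.mul_nonsing_inv M hMu
  have hMiM : M⁻¹ * M = 1 := Matrix.nonsing_inv_mul M hMu
  -- notation
  set w : Fin N → Fin D → ℝ := fun i => Wᵀ i with hwdef
  have hwdp : ∀ i j, w i ⬝ᵥ w j = ∑ a, W a i * W a j := by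
    intro i j; rfl
  -- quantities
  set q : Fin N → ℝ := fun i => w i ⬝ᵥ (M *ᵥ w i) with hqdef
  set t : Fin N → ℝ := fun i => w i ⬝ᵥ (M⁻¹ *ᵥ w i) with htdef
  set n : Fin N → ℝ := fun i => w i ⬝ᵥ w i with hndef
  have hnpos : ∀ i, 0 < n i := fun i => dp_self_pos (hnz i)
  have hqpos : ∀ i, 0 < q i := by
    intro i
    have := hMpd.dotProduct_mulVec_pos (hnz i)
    simpa using this
  -- denominator of capacity equals q i
  have hden : ∀ i, ∑ j, (∑ a, W a i * W a j) ^ 2 = q i := by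
    intro i
    have h1 : ∀ j, (∑ a, W a i * W a j) = (Wᵀ * W) i j := by
      intro j; simp [Matrix.mul_apply]
    have h2 : ∑ j, (∑ a, W a i * W a j) ^ 2 = ((Wᵀ * W) * (Wᵀ * W)) i i := by
      rw [Matrix.mul_apply]
      refine Finset.sum_congr rfl fun j _ => ?_
      rw [h1 j, sq]
      congr 1
      rw [Matrix.mul_apply, Matrix.mul_apply]
      exact Finset.sum_congr rfl fun a _ => by simp [mul_comm]
    rw [h2]
    have h3 : (Wᵀ * W) * (Wᵀ * W) = Wᵀ * M * W := by
      rw [hMdef]; simp only [Matrix.mul_assoc]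
    rw [h3, quadForm_entry]
  -- capacity formula
  have hcap : ∀ i, capacity W i = n i ^ 2 / q i := by
    intro i
    rw [capacity, hden i]
    rfl
  -- Cauchy–Schwarz for the M-bilinear form
  have hCS : ∀ x y : Fin D → ℝ,
      (x ⬝ᵥ (M *ᵥ y)) ^ 2 ≤ (x ⬝ᵥ (M *ᵥ x)) * (y ⬝ᵥ (M *ᵥ y)) := by
    intro x y
    have hq : ∀ s : ℝ, 0 ≤ (y ⬝ᵥ (M *ᵥ y)) * (s * s) + (2 * (x ⬝ᵥ (M *ᵥ y))) * s
        + (x ⬝ᵥ (M *ᵥ x)) := by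
      intro s
      have h0 := (posSemidef_iff_dotProduct_mulVec.mp hMpd.posSemidef).2 (x + s • y)
      have hstar : star (x + s • y) = x + s • y := by simp
      rw [hstar] at h0
      have hexp : (x + s • y) ⬝ᵥ (M *ᵥ (x + s • y))
          = (x ⬝ᵥ (M *ᵥ x)) + s * (x ⬝ᵥ (M *ᵥ y)) + s * (y ⬝ᵥ (M *ᵥ x))
            + s * s * (y ⬝ᵥ (M *ᵥ y)) := by
        rw [mulVec_add, Matrix.mulVec_smul, dotProduct_add, add_dotProduct, add_dotProduct,
          dotProduct_smul, smul_dotProduct, smul_dotProduct, dotProduct_smul]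
        simp only [smul_eq_mul]
        ring
      rw [hexp, bform_symm hMh y x] at h0
      simpa using by linarith [h0]
    have := discrim_le_zero hq
    rw [discrim] at this
    nlinarith [this]
  -- Cauchy–Schwarz bound: capacity W i ≤ t i
  have hbound : ∀ i, capacity W i ≤ t i := by
    intro i
    have hxy : w i ⬝ᵥ (M *ᵥ (M⁻¹ *ᵥ w i)) = n i := by
      rw [Matrix.mulVec_mulVec, hMMi, Matrix.one_mulVec]
    have hyy : (M⁻¹ *ᵥ w i) ⬝ᵥ (M *ᵥ (M⁻¹ *ᵥ w i)) = t i := by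
      rw [Matrix.mulVec_mulVec, hMMi, Matrix.one_mulVec]
      rw [htdef]
      exact dotProduct_comm _ _
    have := hCS (w i) (M⁻¹ *ᵥ w i)
    rw [hxy, hyy] at this
    rw [hcap i, div_le_iff₀ (hqpos i)]
    calc n i ^ 2 ≤ q i * t i := this
    _ = t i * q i := mul_comm _ _
  -- trace identity: ∑ t = D
  have htr : ∑ i, t i = (D : ℝ) := by
    have h1 : ∀ i, t i = (Wᵀ * M⁻¹ * W) i i := fun i => (quadForm_entry W M⁻¹ i i).symm
    calc ∑ i, t i = ∑ i, (Wᵀ * M⁻¹ * W) i i := Finset.sum_congr rfl fun i _ => h1 i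
    _ = Matrix.trace (Wᵀ * M⁻¹ * W) := rfl
    _ = Matrix.trace (M⁻¹ * W * Wᵀ) := by
        rw [Matrix.mul_assoc, Matrix.trace_mul_comm]
    _ = Matrix.trace (1 : Matrix (Fin D) (Fin D) ℝ) := by
        rw [Matrix.mul_assoc, ← hMdef, hMiM]
    _ = (D : ℝ) := by simp [Matrix.trace_one]
  -- equality termwise
  have heq : ∀ i, capacity W i = t i := by
    have hsum : ∑ i, capacity W i = ∑ i, t i := by rw [heff, htr]
    intro i
    exact (Finset.sum_eq_sum_iff_of_le (fun i _ => hbound i)).mp hsum i (Finset.mem_univ i)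
  -- each w i is an eigenvector of M
  have htpos : ∀ i, 0 < t i := by
    intro i
    rw [← heq i, hcap i]
    exact div_pos (pow_pos (hnpos i) 2) (hqpos i)
  set c : Fin N → ℝ := fun i => n i / t i with hcdef
  have hcpos : ∀ i, 0 < c i := fun i => div_pos (hnpos i) (htpos i)
  have heig : ∀ i, M *ᵥ w i = c i • w i := by
    intro i
    have hqt : n i ^ 2 = t i * q i := by
      have := heq i
      rw [hcap i, div_eq_iff (hqpos i).ne'] at this
      exact this
    set y : Fin D → ℝ := M⁻¹ *ᵥ w i with hydef
    have hMy : M *ᵥ y = w i := by rw [hydef, Matrix.mulVec_mulVec, hMMi, Matrix.one_mulVec]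
    have hwy : w i ⬝ᵥ (M *ᵥ y) = n i := by rw [hMy]
    have hyy : y ⬝ᵥ (M *ᵥ y) = t i := by rw [hMy, htdef]; exact dotProduct_comm _ _
    set z : Fin D → ℝ := w i - c i • y with hzdef
    have hz : z ⬝ᵥ (M *ᵥ z) = 0 := by
      rw [hzdef, mulVec_sub, Matrix.mulVec_smul, sub_dotProduct, dotProduct_sub,
        dotProduct_sub, dotProduct_smul, smul_dotProduct, smul_dotProduct, dotProduct_smul,
        bform_symm hMh y (w i)]
      have h1 : w i ⬝ᵥ (M *ᵥ w i) = q i := rfl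
      rw [h1, hwy, hyy]
      have ht := (htpos i).ne'
      rw [hcdef]
      simp only [smul_eq_mul]
      field_simp
      ring_nf
      nlinarith [hqt]
    have hz0 : z = 0 := by
      by_contra hzne
      have := hMpd.dotProduct_mulVec_pos hzne
      rw [show star z = z from by simp, hz] at this
      exact lt_irrefl 0 this
    have : w i = c i • y := by
      have := sub_eq_zero.mp (hzdef ▸ hz0)
      exact this
    calc M *ᵥ w i = M *ᵥ (c i • y) := by rw [← this]
    _ = c i • (M *ᵥ y) := Matrix.mulVec_smul _ _ _
    _ = c i • w i := by rw [hMy]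
  -- all eigenvalues equal, else contradiction with irreducibility
  rcases isEmpty_or_nonempty (Fin N) with hN | hN
  · -- N = 0 : span of the empty set is ⊤, so every vector is zero
    refine ⟨1, one_pos, ?_⟩
    have hsub : ∀ x : Fin D → ℝ, x = 0 := by
      intro x
      have hx : x ∈ Submodule.span ℝ (Set.range w) := by rw [hspan]; trivial
      rw [Set.range_eq_empty, Submodule.span_empty, Submodule.mem_bot] at hx
      exact hx
    ext a b
    have h1 := congrFun (hsub ((W * Wᵀ) a)) b
    have h2 := congrFun (hsub (((1 : ℝ) • (1 : Matrix (Fin D) (Fin D) ℝ)) a)) b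
    simp only [Pi.zero_apply] at h1 h2
    exact h1.trans h2.symm
  · obtain ⟨i₀⟩ := hN
    by_cases hall : ∀ j, c j = c i₀
    · refine ⟨c i₀, hcpos i₀, ?_⟩
      have : Matrix.toLin' M = Matrix.toLin' ((c i₀) • (1 : Matrix (Fin D) (Fin D) ℝ)) := by
        apply LinearMap.ext_on hspan
        rintro x ⟨i, rfl⟩
        rw [Matrix.toLin'_apply, Matrix.toLin'_apply, heig i, hall i]
        simp [Matrix.smul_mulVec, Matrix.one_mulVec]
      exact Matrix.toLin'.injective this
    · push_neg at hall
      obtain ⟨j₀, hj₀⟩ := hall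
      exfalso
      apply hirr
      refine ⟨Finset.univ.filter (fun k => c k = c i₀), ⟨i₀, by simp⟩, ⟨j₀, by simp [hj₀]⟩, ?_⟩
      intro p hp q hq
      simp only [Finset.mem_filter, Finset.mem_univ, true_and] at hp
      simp only [Finset.mem_compl, Finset.mem_filter, Finset.mem_univ, true_and] at hq
      have hne : c p ≠ c q := by rw [hp]; exact fun h => hq h.symm
      have key : c p * (w p ⬝ᵥ w q) = c q * (w p ⬝ᵥ w q) := by
        calc c p * (w p ⬝ᵥ w q) = (c p • w p) ⬝ᵥ w q := by rw [smul_dotProduct]; rfl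
        _ = (M *ᵥ w p) ⬝ᵥ w q := by rw [← heig p]
        _ = w q ⬝ᵥ (M *ᵥ w p) := dotProduct_comm _ _
        _ = w p ⬝ᵥ (M *ᵥ w q) := bform_symm hMh _ _
        _ = w p ⬝ᵥ (c q • w q) := by rw [heig q]
        _ = c q * (w p ⬝ᵥ w q) := by rw [dotProduct_smul]; rfl
      have : w p ⬝ᵥ w q = 0 := by
        by_contra hne0
        exact hne (mul_right_cancel₀ hne0 key)
      rw [← hwdp p q]
      exact this
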